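/- arXiv:1701.06024 — 5 statements merged into one kernel-verified Lean document; each statement's English description precedes it below -/
import Mathlib

section
/- Let g be a real polynomial of degree n ≥ 1 and define Φ(t) = g(e^t). Then for any M > 0, the set {t ∈ ℝ : |Φ(t)| ≥ M} can be written as a disjoint union of at most 3n intervals on each of which Φ' is monotone. -/
open Polynomial Set

/-- For a real polynomial `g` of degree `n ≥ 1` and `Φ(t) = g(e^t)`,
for any `M > 0` the superlevel set `{t : |Φ(t)| ≥ M}` is a disjoint union of at most
`3n` intervals on each of which `Φ'` is monotone. -/
theorem stmt1 (g : Polynomial ℝ) (n : ℕ) (hn : 1 ≤ n) (hdeg : g.natDegree = n)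
    (M : ℝ) (hM : 0 < M) :
    ∃ k : ℕ, k ≤ 3 * n ∧ ∃ I : Fin k → Set ℝ,
      (∀ j, (I j).OrdConnected) ∧
      Pairwise (Function.onFun Disjoint I) ∧
      {t : ℝ | M ≤ |g.eval (Real.exp t)|} = (⋃ j, I j) ∧
      (∀ j, MonotoneOn (deriv fun t => g.eval (Real.exp t)) (I j) ∨
            AntitoneOn (deriv fun t => g.eval (Real.exp t)) (I j)) := by
  classical
  have hg0 : g ≠ 0 := by
    intro h0; rw [h0] at hdeg; simp at hdeg; omega
  set q : ℝ[X] := X * derivative g with hq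
  set p : ℝ[X] := (g * g - C (M * M)) * derivative q with hp
  have hgd0 : derivative g ≠ 0 := by
    intro h0
    have := Polynomial.natDegree_eq_zero_of_derivative_eq_zero h0
    omega
  have hq0 : q ≠ 0 := mul_ne_zero Polynomial.X_ne_zero hgd0
  have hqdeg : q.natDegree ≤ n := by
    have h1 : (derivative g).natDegree ≤ n - 1 := by
      simpa [hdeg] using Polynomial.natDegree_derivative_le g
    calc q.natDegree ≤ (X : ℝ[X]).natDegree + (derivative g).natDegree :=
          Polynomial.natDegree_mul_le
      _ ≤ 1 + (n - 1) := by
          rw [Polynomial.natDegree_X]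
          exact Nat.add_le_add_left h1 1
      _ ≤ n := by omega
  have hqd0 : derivative q ≠ 0 := by
    intro h0
    have h1 := Polynomial.natDegree_eq_zero_of_derivative_eq_zero h0
    rw [hq, Polynomial.natDegree_mul Polynomial.X_ne_zero hgd0] at h1
    simp at h1
  have hqddeg : (derivative q).natDegree ≤ n - 1 :=
    (Polynomial.natDegree_derivative_le q).trans (Nat.sub_le_sub_right hqdeg 1)
  have hA0 : g * g - C (M * M) ≠ 0 := by
    intro h0
    have h1 : g * g = C (M * M) := by linear_combination (norm := ring_nf) h0
    have h2 : (g * g).natDegree = 2 * n := by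
      rw [Polynomial.natDegree_mul hg0 hg0, hdeg]; ring
    rw [h1, Polynomial.natDegree_C] at h2
    omega
  have hp0 : p ≠ 0 := mul_ne_zero hA0 hqd0
  have hpdeg : p.natDegree ≤ 3 * n - 1 := by
    have h1 : (g * g - C (M * M)).natDegree ≤ 2 * n := by
      refine (Polynomial.natDegree_sub_le _ _).trans ?_
      have h2 : (g * g).natDegree = 2 * n := by
        rw [Polynomial.natDegree_mul hg0 hg0, hdeg]; ring
      have h3 : (C (M * M) : ℝ[X]).natDegree = 0 := Polynomial.natDegree_C _
      rw [h2, h3]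
      simp
    calc p.natDegree ≤ (g * g - C (M * M)).natDegree + (derivative q).natDegree :=
          Polynomial.natDegree_mul_le
      _ ≤ 2 * n + (n - 1) := by omega
      _ ≤ 3 * n - 1 := by omega
  -- breakpoints
  set B : Finset ℝ := (p.roots.toFinset.filter fun x => 0 < x).image Real.log with hB
  have hBcard : B.card ≤ 3 * n - 1 := by
    calc B.card ≤ (p.roots.toFinset.filter fun x => 0 < x).card := Finset.card_image_le
      _ ≤ p.roots.toFinset.card := Finset.card_filter_le _ _
      _ ≤ Multiset.card p.roots := p.roots.toFinset_card_le
      _ ≤ p.natDegree := p.card_roots'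
      _ ≤ 3 * n - 1 := hpdeg
  have hmemB : ∀ s : ℝ, p.eval (Real.exp s) = 0 → s ∈ B := by
    intro s hs
    rw [hB]
    refine Finset.mem_image.2 ⟨Real.exp s, ?_, Real.log_exp s⟩
    refine Finset.mem_filter.2 ⟨?_, Real.exp_pos s⟩
    exact Multiset.mem_toFinset.2 ((Polynomial.mem_roots hp0).2 hs)
  -- counting function
  set c : ℝ → ℕ := fun t => (B.filter fun b => b ≤ t).card with hc
  have hcmono : Monotone c := fun t1 t2 h12 =>
    Finset.card_le_card (Finset.monotone_filter_right B fun b _ hb => le_trans hb h12)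
  have hcle : ∀ t, c t ≤ B.card := fun t => Finset.card_le_card (Finset.filter_subset _ _)
  have hgap : ∀ t1 t2 s : ℝ, c t1 = c t2 → t1 < s → s ≤ t2 → s ∉ B := by
    intro t1 t2 s hc12 h1s hs2 hsB
    have hsub : (B.filter fun b => b ≤ t1) ⊂ (B.filter fun b => b ≤ t2) := by
      refine ⟨Finset.monotone_filter_right B fun b _ hb => le_trans hb (h1s.le.trans hs2), ?_⟩
      intro hsub
      have h1 : s ∈ B.filter fun b => b ≤ t2 := Finset.mem_filter.2 ⟨hsB, hs2⟩
      have h2 : s ∉ B.filter fun b => b ≤ t1 := by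
        simp only [Finset.mem_filter]; rintro ⟨-, h⟩; exact absurd h (not_le.2 h1s)
      exact h2 (hsub h1)
    have h3 := Finset.card_lt_card hsub
    have h4 : (B.filter fun b => b ≤ t1).card = (B.filter fun b => b ≤ t2).card := hc12
    omega
  -- derivatives
  have hΦd : ∀ t : ℝ, HasDerivAt (fun t => g.eval (Real.exp t))
      ((derivative g).eval (Real.exp t) * Real.exp t) t := fun t =>
    (g.hasDerivAt (Real.exp t)).comp t (Real.hasDerivAt_exp t)
  have hΦ' : (deriv fun t => g.eval (Real.exp t)) = fun t => q.eval (Real.exp t) := by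
    funext t
    rw [(hΦd t).deriv, hq]
    simp [mul_comm]
  have hΨd : ∀ t : ℝ, HasDerivAt (fun t => q.eval (Real.exp t))
      ((derivative q).eval (Real.exp t) * Real.exp t) t := fun t =>
    (q.hasDerivAt (Real.exp t)).comp t (Real.hasDerivAt_exp t)
  have hΨc : Continuous fun t => q.eval (Real.exp t) :=
    q.continuous.comp Real.continuous_exp
  have hFc : Continuous fun t => (derivative q).eval (Real.exp t) * Real.exp t :=
    ((derivative q).continuous.comp Real.continuous_exp).mul Real.continuous_exp
  have hΦc : Continuous fun t => g.eval (Real.exp t) :=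
    g.continuous.comp Real.continuous_exp
  -- monotonicity on count-level sets
  have hmono : ∀ j : ℕ, MonotoneOn (deriv fun t => g.eval (Real.exp t)) {t | c t = j} ∨
      AntitoneOn (deriv fun t => g.eval (Real.exp t)) {t | c t = j} := by
    intro j
    set D : Set ℝ := {t | c t = j} with hD
    have hDoc : D.OrdConnected := by
      refine ⟨fun x hx y hy z hz => ?_⟩
      have h1 : c z ≤ j := hy ▸ hcmono hz.2
      have h2 : j ≤ c z := hx ▸ hcmono hz.1
      exact le_antisymm h1 h2
    have hDcvx : Convex ℝ D := hDoc.convex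
    have hint : ∀ x ∈ interior D, (derivative q).eval (Real.exp x) * Real.exp x ≠ 0 := by
      intro x hx
      rcases Metric.mem_nhds_iff.1 (mem_interior_iff_mem_nhds.1 hx) with ⟨ε, hε, hball⟩
      have h1 : x - ε / 2 ∈ D := hball (Metric.mem_ball.2 (by
        rw [Real.dist_eq, show x - ε / 2 - x = -(ε / 2) by ring, abs_neg,
          abs_of_nonneg (by linarith)]
        linarith))
      have h2 : x + ε / 2 ∈ D := hball (Metric.mem_ball.2 (by
        rw [Real.dist_eq, show x + ε / 2 - x = ε / 2 by ring,
          abs_of_nonneg (by linarith)]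
        linarith))
      intro h0
      have hq' : (derivative q).eval (Real.exp x) = 0 := by
        rcases mul_eq_zero.1 h0 with h | h
        · exact h
        · exact absurd h (Real.exp_ne_zero x)
      have hpx : p.eval (Real.exp x) = 0 := by
        rw [hp]; simp [hq']
      have hxB : x ∈ B := hmemB x hpx
      exact hgap (x - ε / 2) (x + ε / 2) x (h1.trans h2.symm) (by linarith) (by linarith) hxB
    have hioc : (interior D).OrdConnected := (hDcvx.interior).ordConnected
    have hcont : ContinuousOn (deriv fun t => g.eval (Real.exp t)) D := by
      rw [hΦ']; exact hΨc.continuousOn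
    have hdiff : DifferentiableOn ℝ (deriv fun t => g.eval (Real.exp t)) (interior D) := by
      rw [hΦ']
      exact fun x _ => (hΨd x).differentiableAt.differentiableWithinAt
    have hderiv2 : ∀ x, deriv (deriv fun t => g.eval (Real.exp t)) x =
        (derivative q).eval (Real.exp x) * Real.exp x := by
      intro x; rw [hΦ']; exact (hΨd x).deriv
    by_cases hneg : ∃ x ∈ interior D, (derivative q).eval (Real.exp x) * Real.exp x < 0
    · right
      rcases hneg with ⟨x0, hx0, hx0n⟩
      refine antitoneOn_of_deriv_nonpos hDcvx hcont hdiff ?_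
      intro y hy
      rw [hderiv2]
      by_contra hyp
      push_neg at hyp
      have h0mem : (0 : ℝ) ∈ uIcc ((derivative q).eval (Real.exp x0) * Real.exp x0)
          ((derivative q).eval (Real.exp y) * Real.exp y) := by
        rw [Set.mem_uIcc]; left; exact ⟨hx0n.le, hyp.le⟩
      have := intermediate_value_uIcc (hFc.continuousOn (s := uIcc x0 y)) h0mem
      rcases this with ⟨z, hz, hz0⟩
      exact hint z (hioc.uIcc_subset hx0 hy hz) hz0
    · left
      push_neg at hneg
      refine monotoneOn_of_deriv_nonneg hDcvx hcont hdiff ?_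
      intro y hy
      rw [hderiv2]
      exact hneg y hy
  -- construction
  refine ⟨B.card + 1, by omega, fun j => {t | M ≤ |g.eval (Real.exp t)|} ∩ {t | c t = (j : ℕ)},
    ?_, ?_, ?_, ?_⟩
  · -- OrdConnected
    intro j
    refine ⟨fun t1 ht1 t2 ht2 t ht => ?_⟩
    have hct : c t = (j : ℕ) := le_antisymm (ht2.2 ▸ hcmono ht.2) (ht1.2 ▸ hcmono ht.1)
    refine ⟨?_, hct⟩
    simp only [Set.mem_setOf_eq]
    by_contra habs
    have habs' : |g.eval (Real.exp t)| < M := not_le.1 habs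
    have ht2' : M ≤ |g.eval (Real.exp t2)| := ht2.1
    have ht1' : M ≤ |g.eval (Real.exp t1)| := ht1.1
    have htlt : t < t2 := by
      rcases lt_or_eq_of_le ht.2 with h | h
      · exact h
      · exfalso; rw [h] at habs'; linarith
    have hM2 : M ∈ Icc (|g.eval (Real.exp t)|) (|g.eval (Real.exp t2)|) :=
      ⟨habs'.le, ht2'⟩
    have := intermediate_value_Icc htlt.le ((hΦc.abs).continuousOn (s := Icc t t2))
    rcases this hM2 with ⟨s, hs, hsM⟩
    have hsM' : |g.eval (Real.exp s)| = M := hsM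
    have hst : t < s := by
      rcases lt_or_eq_of_le hs.1 with h | h
      · exact h
      · exfalso; rw [← h] at hsM'; linarith
    have hroot : (g * g - C (M * M)).eval (Real.exp s) = 0 := by
      have : |g.eval (Real.exp s)| ^ 2 = M ^ 2 := by rw [hsM']
      rw [sq_abs] at this
      simp only [Polynomial.eval_sub, Polynomial.eval_mul, Polynomial.eval_C]
      nlinarith [this]
    have hps : p.eval (Real.exp s) = 0 := by
      rw [hp, Polynomial.eval_mul, hroot, zero_mul]
    have hsB : s ∈ B := hmemB s hps
    exact hgap t1 t2 s (ht1.2.trans ht2.2.symm) (lt_of_le_of_lt ht.1 hst) hs.2 hsB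
  · -- pairwise disjoint
    intro j1 j2 hne
    refine Set.disjoint_left.2 fun t ht1 ht2 => hne ?_
    exact Fin.ext (by rw [← ht1.2, ← ht2.2])
  · -- union
    ext t
    simp only [Set.mem_setOf_eq, Set.mem_iUnion]
    constructor
    · intro ht
      exact ⟨⟨c t, Nat.lt_succ_of_le (hcle t)⟩, ht, rfl⟩
    · rintro ⟨j, hj, -⟩
      exact hj
  · -- monotone
    intro j
    rcases hmono (j : ℕ) with h | h
    · exact Or.inl (h.mono Set.inter_subset_right)
    · exact Or.inr (h.mono Set.inter_subset_right)
end

section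
/- Let f_1, ..., f_m be real polynomials with n = max_i deg f_i, write f_i(t) = Σ_{j=0}^n a_{ij} t^j, and for fixed real numbers λ_1, ..., λ_m set Φ(t) = Σ_i λ_i f_i(e^t). Then there exist real numbers α_1, ..., α_n such that Φ(t) = Σ_i λ_i f_i(0) + Σ_{k=1}^n α_k Φ^{(k)}(t) for all t, where Φ^{(k)} denotes the k-th derivative of Φ. -/
open Polynomial Finset

/-- Iterated derivative of a finite sum of exponentials. -/
lemma iter_deriv_exp_sum {ι : Type*} (s : Finset ι) (c a : ι → ℝ) (k : ℕ) :
    iteratedDeriv k (fun t => ∑ j ∈ s, c j * Real.exp (a j * t)) =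
      fun t => ∑ j ∈ s, c j * (a j ^ k * Real.exp (a j * t)) := by
  induction k with
  | zero => simp
  | succ k ih =>
    have hd : ∀ (j : ι) (t : ℝ), HasDerivAt (fun t => c j * (a j ^ k * Real.exp (a j * t)))
        (c j * (a j ^ (k + 1) * Real.exp (a j * t))) t := by
      intro j t
      have h1 : HasDerivAt (fun t : ℝ => Real.exp (a j * t))
          (Real.exp (a j * t) * (a j * 1)) t :=
        ((hasDerivAt_id t).const_mul (a j)).exp
      have h2 := h1.const_mul (c j * a j ^ k)
      rw [show (fun t => c j * (a j ^ k * Real.exp (a j * t))) =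
          fun y => c j * a j ^ k * Real.exp (a j * y) by funext u; ring]
      exact h2.congr_deriv (by ring)
    rw [iteratedDeriv_succ, ih]
    funext t
    rw [deriv_fun_sum (fun j _ => (hd j t).differentiableAt)]
    exact Finset.sum_congr rfl fun j _ => (hd j t).deriv

/-- For real polynomials `f_1, ..., f_m` with `n = max deg f_i` and
`Φ(t) = Σ λ_i f_i(e^t)`, there are reals `α_1, ..., α_n` with
`Φ(t) = Σ λ_i f_i(0) + Σ_{k=1}^n α_k Φ^{(k)}(t)` for all `t`. -/
theorem stmt2 (m : ℕ) (f : Fin m → Polynomial ℝ) (n : ℕ)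
    (hn : n = Finset.univ.sup fun i => (f i).natDegree)
    (lam : Fin m → ℝ) :
    ∃ α : ℕ → ℝ, ∀ t : ℝ,
      (∑ i, lam i * (f i).eval (Real.exp t)) =
        (∑ i, lam i * (f i).eval 0) +
        ∑ k ∈ Finset.Icc 1 n,
          α k * iteratedDeriv k (fun t => ∑ i, lam i * (f i).eval (Real.exp t)) t := by
  -- coefficients
  set C : ℕ → ℝ := fun j => ∑ i, lam i * (f i).coeff j with hC
  have hdeg : ∀ i, (f i).natDegree < n + 1 := by
    intro i
    have : (f i).natDegree ≤ n := hn ▸ Finset.le_sup (f := fun i => (f i).natDegree) (Finset.mem_univ i)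
    omega
  -- Φ as a sum of exponentials
  have hPhi : ∀ t : ℝ, (∑ i, lam i * (f i).eval (Real.exp t)) =
      ∑ j ∈ Finset.range (n + 1), C j * Real.exp ((j : ℝ) * t) := by
    intro t
    calc ∑ i, lam i * (f i).eval (Real.exp t)
        = ∑ i, ∑ j ∈ Finset.range (n + 1), lam i * (f i).coeff j * Real.exp ((j : ℝ) * t) := by
          refine Finset.sum_congr rfl fun i _ => ?_
          rw [Polynomial.eval_eq_sum_range' (hdeg i), Finset.mul_sum]
          refine Finset.sum_congr rfl fun j _ => ?_
          rw [← Real.exp_nat_mul]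
          ring
      _ = ∑ j ∈ Finset.range (n + 1), ∑ i, lam i * (f i).coeff j * Real.exp ((j : ℝ) * t) :=
          Finset.sum_comm
      _ = ∑ j ∈ Finset.range (n + 1), C j * Real.exp ((j : ℝ) * t) := by
          refine Finset.sum_congr rfl fun j _ => ?_
          rw [hC, Finset.sum_mul]
  -- interpolation polynomial
  set P : Polynomial ℝ :=
    Lagrange.interpolate (Finset.range (n + 1)) (fun j => (j : ℝ))
      (fun j => if j = 0 then 0 else 1) with hP
  have hinj : Set.InjOn (fun j : ℕ => (j : ℝ)) (Finset.range (n + 1)) :=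
    fun a _ b _ h => Nat.cast_injective h
  have hPnode : ∀ j ∈ Finset.range (n + 1),
      P.eval (j : ℝ) = if j = 0 then 0 else 1 := fun j hj =>
    Lagrange.eval_interpolate_at_node _ hinj hj
  have hPdeg : P.natDegree < n + 1 := by
    have := Lagrange.degree_interpolate_lt (v := fun j : ℕ => (j : ℝ))
      (fun j => if j = 0 then 0 else 1) hinj
    rw [Finset.card_range] at this
    rcases eq_or_ne P 0 with h | h
    · simp [h]
    · exact_mod_cast (Polynomial.degree_eq_natDegree h) ▸ this
  have hP0 : P.coeff 0 = 0 := by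
    have := hPnode 0 (Finset.mem_range.2 (by omega))
    simpa [Polynomial.eval_zero, Polynomial.coeff_zero_eq_eval_zero] using this
  -- key property of α := P.coeff
  have hαsum : ∀ j ∈ Finset.Icc 1 n,
      ∑ k ∈ Finset.Icc 1 n, P.coeff k * (j : ℝ) ^ k = 1 := by
    intro j hj
    simp only [Finset.mem_Icc] at hj
    have hev : P.eval (j : ℝ) = ∑ k ∈ Finset.range (n + 1), P.coeff k * (j : ℝ) ^ k :=
      Polynomial.eval_eq_sum_range' hPdeg _
    have h1 : P.eval (j : ℝ) = 1 := by
      have := hPnode j (Finset.mem_range.2 (by omega))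
      simpa [show j ≠ 0 by omega] using this
    have hsplit : ∑ k ∈ Finset.range (n + 1), P.coeff k * (j : ℝ) ^ k =
        P.coeff 0 * (j : ℝ) ^ 0 + ∑ k ∈ Finset.Icc 1 n, P.coeff k * (j : ℝ) ^ k := by
      rw [Finset.range_eq_Ico, show Finset.Ico 0 (n + 1) = insert 0 (Finset.Icc 1 n) by
        ext x; simp [Finset.mem_Ico, Finset.mem_Icc]; omega,
        Finset.sum_insert (by simp)]
    rw [hev, hsplit, hP0] at h1
    linarith
  refine ⟨P.coeff, fun t => ?_⟩
  -- rewrite iterated derivatives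
  have hiter : ∀ k, iteratedDeriv k (fun t => ∑ i, lam i * (f i).eval (Real.exp t)) t =
      ∑ j ∈ Finset.range (n + 1), C j * ((j : ℝ) ^ k * Real.exp ((j : ℝ) * t)) := by
    intro k
    have : (fun t => ∑ i, lam i * (f i).eval (Real.exp t)) =
        (fun t => ∑ j ∈ Finset.range (n + 1), C j * Real.exp ((j : ℝ) * t)) :=
      funext hPhi
    rw [this, iter_deriv_exp_sum]
  have hC0 : (∑ i, lam i * (f i).eval 0) = C 0 := by
    simp [hC, ← Polynomial.coeff_zero_eq_eval_zero]
  rw [hPhi t, hC0]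
  simp only [hiter, Finset.mul_sum]
  rw [Finset.sum_comm]
  have hRHS : ∀ j ∈ Finset.range (n + 1),
      (∑ k ∈ Finset.Icc 1 n, P.coeff k * (C j * ((j : ℝ) ^ k * Real.exp ((j : ℝ) * t)))) =
        if j = 0 then 0 else C j * Real.exp ((j : ℝ) * t) := by
    intro j hj
    rcases eq_or_ne j 0 with rfl | hj0
    · rw [if_pos rfl]
      refine Finset.sum_eq_zero fun k hk => ?_
      have hk0 : k ≠ 0 := by simp only [Finset.mem_Icc] at hk; omega
      simp [zero_pow hk0]
    · have hjm : j ∈ Finset.Icc 1 n := by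
        simp only [Finset.mem_range] at hj
        simp only [Finset.mem_Icc]; omega
      calc ∑ k ∈ Finset.Icc 1 n, P.coeff k * (C j * ((j : ℝ) ^ k * Real.exp ((j : ℝ) * t)))
          = (∑ k ∈ Finset.Icc 1 n, P.coeff k * (j : ℝ) ^ k) *
              (C j * Real.exp ((j : ℝ) * t)) := by
            rw [Finset.sum_mul]; exact Finset.sum_congr rfl fun k _ => by ring
        _ = if j = 0 then 0 else C j * Real.exp ((j : ℝ) * t) := by
            rw [hαsum j hjm, one_mul, if_neg hj0]
  have hins : Finset.range (n + 1) = insert 0 (Finset.Icc 1 n) := by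
    ext x; simp only [Finset.mem_range, Finset.mem_insert, Finset.mem_Icc]; omega
  rw [Finset.sum_congr rfl hRHS, hins, Finset.sum_insert (by simp), Finset.sum_insert (by simp),
    if_pos rfl,
    Finset.sum_congr rfl (fun j hj => if_neg (by simp only [Finset.mem_Icc] at hj; omega) :
      ∀ j ∈ Finset.Icc 1 n,
        (if j = 0 then (0:ℝ) else C j * Real.exp ((j : ℝ) * t)) = C j * Real.exp ((j : ℝ) * t))]
  simp
end

section
/- Let S ⊂ 𝕂^m be a symmetric Borel set not containing 0, where 𝕂 is ℝ or ℚ_p. The Borel chromatic number of the Cayley graph Cay(𝕂^m, S) is at most countably infinite if and only if the origin is not in the topological closure of S. -/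
open Pointwise MeasureTheory

lemma stmt10_aux {G : Type*} [TopologicalSpace G] [MeasurableSpace G] [BorelSpace G]
    [AddCommGroup G] [IsTopologicalAddGroup G] [LocallyCompactSpace G] [T2Space G]
    [SecondCountableTopology G] (S : Set G) :
    (∃ c : G → ℕ, (∀ i, MeasurableSet (c ⁻¹' {i})) ∧
        ∀ x y, x - y ∈ S → c x ≠ c y) ↔ (0 : G) ∉ closure S := by
  classical
  constructor
  · rintro ⟨c, hcm, hcp⟩ h0
    set μ : Measure G := Measure.addHaar
    have hcover : (⋃ i, c ⁻¹' {i}) = Set.univ := by ext x; simp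
    have hpos : ∃ i, 0 < μ (c ⁻¹' {i}) := by
      by_contra h
      push_neg at h
      simp only [le_zero_iff] at h
      have h1 : μ Set.univ = 0 := by
        rw [← hcover]
        exact le_antisymm ((measure_iUnion_le _).trans (by simp [h])) bot_le
      exact ((isOpen_univ.measure_pos μ Set.univ_nonempty).ne' h1)
    obtain ⟨i, hi⟩ := hpos
    have hst : (c ⁻¹' {i}) - (c ⁻¹' {i}) ∈ nhds (0 : G) :=
      Measure.sub_mem_nhds_zero_of_addHaar_pos μ _ (hcm i) hi
    obtain ⟨z, hz1, hz2⟩ := mem_closure_iff_nhds.mp h0 _ hst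
    obtain ⟨x, hx, y, hy, rfl⟩ := Set.mem_sub.mp hz1
    exact hcp x y hz2 (hx.trans hy.symm)
  · intro h0
    have hV : Sᶜ ∈ nhds (0 : G) := by
      rw [mem_nhds_iff]
      exact ⟨(closure S)ᶜ, fun x hx hxS => hx (subset_closure hxS),
        isOpen_compl_iff.mpr isClosed_closure, h0⟩
    obtain ⟨V, hVmem, hVsub⟩ := exists_nhds_half_neg hV
    set W : Set G := interior V with hWdef
    have hWo : IsOpen W := isOpen_interior
    have hW0 : (0 : G) ∈ W := mem_interior_iff_mem_nhds.mpr hVmem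
    haveI : Nonempty G := ⟨0⟩
    let d : ℕ → G := TopologicalSpace.denseSeq G
    have hex : ∀ x : G, ∃ n, x - d n ∈ W := by
      intro x
      have hU : IsOpen ((fun y => x - y) ⁻¹' W) :=
        hWo.preimage (continuous_const.sub continuous_id)
      have hxU : x ∈ (fun y => x - y) ⁻¹' W := by simpa using hW0
      obtain ⟨n, hn⟩ := (TopologicalSpace.denseRange_denseSeq G).exists_mem_open hU ⟨x, hxU⟩
      exact ⟨n, hn⟩
    refine ⟨fun x => Nat.find (hex x), ?_, ?_⟩
    · intro i
      have hmeas : ∀ j, MeasurableSet {x : G | x - d j ∈ W} := fun j =>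
        (hWo.preimage (continuous_id.sub continuous_const)).measurableSet
      have : (fun x => Nat.find (hex x)) ⁻¹' {i} =
          {x : G | x - d i ∈ W} ∩ ⋂ j ∈ Finset.range i, {x : G | x - d j ∈ W}ᶜ := by
        ext x
        simp only [Set.mem_preimage, Set.mem_singleton_iff, Set.mem_inter_iff, Set.mem_iInter,
          Set.mem_compl_iff, Set.mem_setOf_eq, Finset.mem_range, Nat.find_eq_iff]
      rw [this]
      exact (hmeas i).inter (MeasurableSet.biInter (Set.to_countable _)
        (fun j _ => (hmeas j).compl))
    · intro x y hxy hc
      have hc' : Nat.find (hex x) = Nat.find (hex y) := hc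
      have hx : x - d (Nat.find (hex x)) ∈ W := Nat.find_spec (hex x)
      have hy : y - d (Nat.find (hex x)) ∈ W := by
        rw [hc']; exact Nat.find_spec (hex y)
      have := hVsub _ (interior_subset hx) _ (interior_subset hy)
      rw [sub_sub_sub_cancel_right] at this
      exact this hxy

/-- For `𝕂 = ℝ` or `𝕂 = ℚ_p` and a symmetric Borel set `S ⊆ 𝕂^m` with
`0 ∉ S`, the Cayley graph `Cay(𝕂^m, S)` admits a countable Borel proper coloring
(i.e. its Borel chromatic number is at most `ℵ₀`) if and only if `0` is not in the
closure of `S`. -/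
theorem stmt10 (m p : ℕ) [Fact p.Prime] [MeasurableSpace ℚ_[p]] [BorelSpace ℚ_[p]]
    (S : Set (Fin m → ℝ)) (hSmeas : MeasurableSet S) (hSsym : S = -S)
    (hS0 : (0 : Fin m → ℝ) ∉ S)
    (S' : Set (Fin m → ℚ_[p])) (hSmeas' : MeasurableSet S') (hSsym' : S' = -S')
    (hS0' : (0 : Fin m → ℚ_[p]) ∉ S') :
    ((∃ c : (Fin m → ℝ) → ℕ, (∀ i, MeasurableSet (c ⁻¹' {i})) ∧
        ∀ x y, x - y ∈ S → c x ≠ c y) ↔ (0 : Fin m → ℝ) ∉ closure S) ∧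
    ((∃ c : (Fin m → ℚ_[p]) → ℕ, (∀ i, MeasurableSet (c ⁻¹' {i})) ∧
        ∀ x y, x - y ∈ S' → c x ≠ c y) ↔ (0 : Fin m → ℚ_[p]) ∉ closure S') := by
  exact ⟨stmt10_aux S, stmt10_aux S'⟩
end

section
/- Let (V, Σ, ν) be a probability space and A : L²(V) → L²(V) a nonzero bounded self-adjoint operator. Fix R ∈ ℝ and set ε = ‖A𝟙 − R𝟙‖₂ where 𝟙 is the constant function 1. Let m(A) = inf{⟨Af, f⟩ : ‖f‖₂ = 1}. If there exists an independent set I for A with ν(I) > 0 and R − m(A) − ε > 0, then ν(I) ≤ (−m(A) + 2ε) / (R − m(A) − ε). -/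
open MeasureTheory
open scoped RealInnerProductSpace

private lemma stmt12_aux (α ε R mA x y : ℝ) (hα0 : 0 < α)
    (hkey : mA * (α - α ^ 2) ≤ α ^ 2 * (x + R) - 2 * α * (y + R * α))
    (hx : x ≤ ε) (hy : -ε ≤ y) (hpos : R - mA - ε > 0) :
    α ≤ (-mA + 2 * ε) / (R - mA - ε) := by
  have hq : α * (mA * (1 - α)) ≤ α * (α * ε - R * α + 2 * ε) := by
    nlinarith [mul_le_mul_of_nonneg_right hx (sq_nonneg α),
      mul_le_mul_of_nonneg_left hy hα0.le]
  have hlin : mA * (1 - α) ≤ α * ε - R * α + 2 * ε := (mul_le_mul_iff_right₀ hα0).mp hq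
  rw [le_div_iff₀ hpos]
  nlinarith [hlin]

/-- Operator-theoretic Hoffman bound for the independence ratio.
If `A` is a nonzero bounded self-adjoint operator on `L²(V, ν)` of a probability
space, `𝟙` the constant function one, `ε = ‖A𝟙 - R𝟙‖₂`, `m(A)` the infimum of the
numerical range, and `I` is a measurable independent set for `A` with `ν(I) > 0`,
then under `R - m(A) - ε > 0` we get `ν(I) ≤ (-m(A) + 2ε)/(R - m(A) - ε)`. -/
theorem stmt12 {V : Type*} [MeasurableSpace V] (ν : Measure V) [IsProbabilityMeasure ν]
    (A : Lp ℝ 2 ν →L[ℝ] Lp ℝ 2 ν) (hA0 : A ≠ 0)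
    (hsa : ∀ f g : Lp ℝ 2 ν, ⟪A f, g⟫ = ⟪f, A g⟫)
    (one : Lp ℝ 2 ν) (hone : (one : V → ℝ) =ᵐ[ν] fun _ => (1 : ℝ))
    (R mA : ℝ)
    (hm : IsGLB {r : ℝ | ∃ f : Lp ℝ 2 ν, ‖f‖ = 1 ∧ ⟪A f, f⟫ = r} mA)
    (I : Set V) (hI : MeasurableSet I) (hIpos : 0 < ν I)
    (hind : ∀ f : Lp ℝ 2 ν, (∀ᵐ x ∂ν, x ∉ I → f x = 0) → ⟪A f, f⟫ = 0)
    (hpos : R - mA - ‖A one - R • one‖ > 0) :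
    (ν I).toReal ≤ (-mA + 2 * ‖A one - R • one‖) / (R - mA - ‖A one - R • one‖) := by
  set ε := ‖A one - R • one‖ with hεdef
  have hε0 : (0:ℝ) ≤ ε := norm_nonneg _
  have hItop : ν I ≠ ⊤ := measure_ne_top ν I
  set f : Lp ℝ 2 ν := indicatorConstLp 2 hI hItop (1:ℝ) with hfdef
  set α := (ν I).toReal with hαdef
  have hα0 : 0 < α := ENNReal.toReal_pos hIpos.ne' hItop
  have hα1 : α ≤ 1 := by
    have h1 : ν I ≤ 1 := prob_le_one
    simpa using ENNReal.toReal_mono ENNReal.one_ne_top h1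
  -- a.e. representation of f
  have hfae : (f : V → ℝ) =ᵐ[ν] I.indicator fun _ => (1:ℝ) := indicatorConstLp_coeFn
  -- basic inner products
  have hoo : ⟪one, one⟫ = (1:ℝ) := by
    rw [L2.inner_def]
    have : ∫ x, ⟪(one : V → ℝ) x, (one : V → ℝ) x⟫ ∂ν = ∫ _x, (1:ℝ) ∂ν := by
      apply integral_congr_ae
      filter_upwards [hone] with x hx
      simp [hx]
    rw [this]; simp
  have hfo : ⟪f, one⟫ = α := by
    rw [L2.inner_def]
    have : ∫ x, ⟪(f : V → ℝ) x, (one : V → ℝ) x⟫ ∂ν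
        = ∫ x, I.indicator (fun _ => (1:ℝ)) x ∂ν := by
      apply integral_congr_ae
      filter_upwards [hfae, hone] with x hx hy
      simp [hx, hy]
    rw [this, integral_indicator_const _ hI]; simp [hαdef, Measure.real]
  have hff : ⟪f, f⟫ = α := by
    rw [L2.inner_def]
    have : ∫ x, ⟪(f : V → ℝ) x, (f : V → ℝ) x⟫ ∂ν
        = ∫ x, I.indicator (fun _ => (1:ℝ)) x ∂ν := by
      apply integral_congr_ae
      filter_upwards [hfae] with x hx
      rw [hx]
      by_cases h : x ∈ I <;> simp [Set.indicator_apply, h]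
    rw [this, integral_indicator_const _ hI]; simp [hαdef, Measure.real]
  have hone_norm : ‖one‖ = 1 := by
    have := real_inner_self_eq_norm_sq one
    nlinarith [norm_nonneg one]
  have hf_norm : ‖f‖ ^ 2 = α := by
    rw [← real_inner_self_eq_norm_sq, hff]
  have hf_norm_le : ‖f‖ ≤ 1 := by
    nlinarith [norm_nonneg f]
  -- independence gives vanishing quadratic form on f
  have hzero : ⟪A f, f⟫ = 0 := by
    apply hind
    filter_upwards [hfae] with x hx hxI
    rw [hx, Set.indicator_of_notMem hxI]
  have hof : ⟪one, f⟫ = α := by rw [real_inner_comm]; exact hfo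
  -- lower bound of numerical range
  have hlow : ∀ h : Lp ℝ 2 ν, mA * ‖h‖ ^ 2 ≤ ⟪A h, h⟫ := by
    intro h
    rcases eq_or_ne h 0 with rfl | hne
    · simp
    · have hn : (0:ℝ) < ‖h‖ := norm_pos_iff.mpr hne
      set u := ‖h‖⁻¹ • h with hudef
      have hu : ‖u‖ = 1 := by
        rw [hudef, norm_smul, norm_inv, norm_norm, inv_mul_cancel₀ hn.ne']
      have hle : mA ≤ ⟪A u, u⟫ := hm.1 ⟨u, hu, rfl⟩
      have huu : ⟪A u, u⟫ = ‖h‖⁻¹ * (‖h‖⁻¹ * ⟪A h, h⟫) := by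
        rw [hudef, A.map_smul, real_inner_smul_left, real_inner_smul_right]
      rw [huu] at hle
      have hmul := mul_le_mul_of_nonneg_right hle (sq_nonneg ‖h‖)
      have heq : ‖h‖⁻¹ * (‖h‖⁻¹ * ⟪A h, h⟫) * ‖h‖ ^ 2 = ⟪A h, h⟫ := by
        rw [sq]
        field_simp
      rw [heq] at hmul
      exact hmul
  -- the test vector g
  set g := f - α • one with hgdef
  have hgg : ⟪g, g⟫ = α - α ^ 2 := by
    simp only [hgdef, inner_sub_left, inner_sub_right, real_inner_smul_left,
      real_inner_smul_right, hff, hfo, hof, hoo]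
    ring
  have hg_norm : ‖g‖ ^ 2 = α - α ^ 2 := by
    rw [← real_inner_self_eq_norm_sq, hgg]
  -- expand quadratic form at g
  have hAgg : ⟪A g, g⟫ = α ^ 2 * ⟪A one, one⟫ - 2 * α * ⟪A one, f⟫ := by
    have h1 : ⟪A f, one⟫ = ⟪A one, f⟫ := by rw [hsa f one, real_inner_comm]
    simp only [hgdef, A.map_sub, A.map_smul, inner_sub_left, inner_sub_right,
      real_inner_smul_left, real_inner_smul_right, hzero, h1]
    ring
  -- error vector bounds
  set e := A one - R • one with hedef
  have hAone_one : ⟪A one, one⟫ = ⟪e, one⟫ + R := by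
    simp only [hedef, inner_sub_left, real_inner_smul_left, hoo]
    ring
  have hAone_f : ⟪A one, f⟫ = ⟪e, f⟫ + R * α := by
    simp only [hedef, inner_sub_left, real_inner_smul_left, hof]
    ring
  have hcs1 : |⟪e, one⟫| ≤ ε := by
    calc |⟪e, one⟫| ≤ ‖e‖ * ‖one‖ := abs_real_inner_le_norm _ _
      _ = ε := by rw [hone_norm, mul_one, hεdef, hedef]
  have hcs2 : |⟪e, f⟫| ≤ ε := by
    calc |⟪e, f⟫| ≤ ‖e‖ * ‖f‖ := abs_real_inner_le_norm _ _
      _ ≤ ε * 1 := by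
          rw [hεdef, hedef]
          exact mul_le_mul_of_nonneg_left hf_norm_le (norm_nonneg _)
      _ = ε := mul_one ε
  -- the main inequality
  have hkey : mA * (α - α ^ 2) ≤ α ^ 2 * (⟪e, one⟫ + R) - 2 * α * (⟪e, f⟫ + R * α) := by
    have hg2 := hlow g
    rw [hg_norm, hAgg, hAone_one, hAone_f] at hg2
    linarith
  have habs1' : ⟪e, one⟫ ≤ ε := le_of_abs_le hcs1
  have habs2 : -ε ≤ ⟪e, f⟫ := neg_le_of_abs_le hcs2
  obtain ⟨x, hx⟩ : ∃ x : ℝ, ⟪e, one⟫ = x := ⟨_, rfl⟩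
  obtain ⟨y, hy⟩ : ∃ y : ℝ, ⟪e, f⟫ = y := ⟨_, rfl⟩
  rw [hx] at hkey habs1'
  rw [hy] at hkey habs2
  clear_value α ε
  exact stmt12_aux α ε R mA x y hα0 hkey habs1' habs2 hpos
end

section
/- Let A : L²(V) → L²(V) be a nonzero bounded self-adjoint operator on L² of a probability space, and suppose V can be partitioned into finitely many measurable independent sets for A, with χ(A) the least such number. Then χ(A) ≥ 1 − M(A)/m(A), where m(A) and M(A) are the infimum and supremum of ⟨Af, f⟩ over unit vectors f; in particular m(A) < 0 and M(A) > 0. -/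
open MeasureTheory
open scoped RealInnerProductSpace

theorem myCoeFn_sum {V : Type*} [MeasurableSpace V] {ν : Measure V} {ι : Type*} (s : Finset ι)
    (f : ι → Lp ℝ 2 ν) : ⇑(∑ i ∈ s, f i) =ᵐ[ν] fun x => ∑ i ∈ s, f i x := by
  classical
  induction s using Finset.induction_on with
  | empty => simp only [Finset.sum_empty]; exact Lp.coeFn_zero ℝ 2 ν
  | insert _ _ h ih =>
    rename_i a s'
    rw [Finset.sum_insert h]
    filter_upwards [Lp.coeFn_add (f a) (∑ i ∈ s', f i), ih] with x h1 h2
    rw [h1, Pi.add_apply, h2, Finset.sum_insert h]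


/-- Operator Hoffman bound for the chromatic number. If `A` is a
nonzero bounded self-adjoint operator on `L²` of a probability space and `V` is
partitioned into `k` measurable independent sets for `A`, then `m(A) < 0`,
`M(A) > 0` and `k ≥ 1 - M(A)/m(A)`, where `m(A)`, `M(A)` are the endpoints of the
numerical range of `A`. -/
theorem stmt13 {V : Type*} [MeasurableSpace V] (ν : Measure V) [IsProbabilityMeasure ν]
    (A : Lp ℝ 2 ν →L[ℝ] Lp ℝ 2 ν) (hA0 : A ≠ 0)
    (hsa : ∀ f g : Lp ℝ 2 ν, ⟪A f, g⟫ = ⟪f, A g⟫)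
    (mA MA : ℝ)
    (hm : IsGLB {r : ℝ | ∃ f : Lp ℝ 2 ν, ‖f‖ = 1 ∧ ⟪A f, f⟫ = r} mA)
    (hM : IsLUB {r : ℝ | ∃ f : Lp ℝ 2 ν, ‖f‖ = 1 ∧ ⟪A f, f⟫ = r} MA)
    (k : ℕ) (I : Fin k → Set V)
    (hmeas : ∀ i, MeasurableSet (I i))
    (hdisj : Pairwise (Function.onFun Disjoint I))
    (hcover : (⋃ i, I i) = Set.univ)
    (hind : ∀ i, ∀ f : Lp ℝ 2 ν, (∀ᵐ x ∂ν, x ∉ I i → f x = 0) → ⟪A f, f⟫ = 0) :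
    mA < 0 ∧ 0 < MA ∧ 1 - MA / mA ≤ (k : ℝ) := by
  classical
  set P : Lp ℝ 2 ν → Fin k → Lp ℝ 2 ν :=
    fun g i => MemLp.toLp ((I i).indicator g) ((Lp.memLp g).indicator (hmeas i)) with hPdef
  have hP_coe : ∀ g i, ⇑(P g i) =ᵐ[ν] (I i).indicator ⇑g := fun g i => MemLp.coeFn_toLp _
  have hP_zero : ∀ g i, ∀ᵐ x ∂ν, x ∉ I i → (P g i) x = 0 := by
    intro g i
    filter_upwards [hP_coe g i] with x hx hxI
    rw [hx, Set.indicator_of_notMem hxI]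
  have hdiag : ∀ g i, ⟪A (P g i), P g i⟫ = 0 := fun g i => hind i _ (hP_zero g i)
  have hPsum : ∀ g, ∑ i, P g i = g := by
    intro g
    apply Lp.ext
    have hall : ∀ᵐ x ∂ν, ∀ i, (P g i) x = (I i).indicator g x :=
      ae_all_iff.mpr (fun i => hP_coe g i)
    filter_upwards [myCoeFn_sum Finset.univ (P g), hall] with x h1 h2
    rw [h1]
    obtain ⟨i₀, hi₀⟩ : ∃ i, x ∈ I i := by
      have : x ∈ ⋃ i, I i := hcover ▸ Set.mem_univ x
      simpa using this
    rw [Finset.sum_congr rfl (fun i _ => h2 i),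
      Finset.sum_eq_single i₀ (fun j _ hj => ?_) (by simp)]
    · exact Set.indicator_of_mem hi₀ _
    · have hx : x ∉ I j := fun hxj => (hdisj hj).le_bot ⟨hxj, hi₀⟩
      exact Set.indicator_of_notMem hx _
  have horth : ∀ (g : Lp ℝ 2 ν) i j, j ≠ i → ⟪P g i, P g j⟫ = 0 := by
    intro g i j hj
    rw [L2.inner_def]
    refine integral_eq_zero_of_ae ?_
    filter_upwards [hP_coe g i, hP_coe g j] with x h1 h2
    simp only [RCLike.inner_apply, conj_trivial, Pi.zero_apply, h1, h2]
    by_cases hx : x ∈ I i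
    · have hxj : x ∉ I j := fun hxj => (hdisj hj).le_bot ⟨hxj, hx⟩
      rw [Set.indicator_of_notMem hxj, zero_mul]
    · rw [Set.indicator_of_notMem hx, mul_zero]
  have hPself : ∀ (g : Lp ℝ 2 ν) i, ⟪P g i, g⟫ = ‖P g i‖^2 := by
    intro g i
    have h := inner_sum (𝕜 := ℝ) Finset.univ (P g) (P g i)
    rw [hPsum g] at h
    rw [h, Finset.sum_eq_single i (fun j _ hj => horth g i j hj) (by simp)]
    exact real_inner_self_eq_norm_sq _
  -- membership of normalized vectors
  have hscale : ∀ g : Lp ℝ 2 ν, g ≠ 0 →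
      (⟪A g, g⟫ / ‖g‖^2) ∈ {r : ℝ | ∃ f : Lp ℝ 2 ν, ‖f‖ = 1 ∧ ⟪A f, f⟫ = r} := by
    intro g hg
    have hn : ‖g‖ ≠ 0 := norm_ne_zero_iff.mpr hg
    refine ⟨‖g‖⁻¹ • g, ?_, ?_⟩
    · rw [norm_smul, norm_inv, norm_norm, inv_mul_cancel₀ hn]
    · rw [A.map_smul, real_inner_smul_left, real_inner_smul_right,
        eq_div_iff (pow_ne_zero 2 hn)]
      field_simp
  have hlow : ∀ g : Lp ℝ 2 ν, mA * ‖g‖^2 ≤ ⟪A g, g⟫ := by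
    intro g
    by_cases hg : g = 0
    · simp [hg]
    · have h1 := hm.1 (hscale g hg)
      have h2 : (0:ℝ) < ‖g‖^2 := pow_pos (norm_pos_iff.mpr hg) 2
      have h3 : mA * ‖g‖^2 ≤ (⟪A g, g⟫ / ‖g‖^2) * ‖g‖^2 :=
        mul_le_mul_of_nonneg_right h1 h2.le
      rwa [div_mul_cancel₀ _ h2.ne'] at h3
  -- existence of nonzero quadratic value
  have hex : ∃ f : Lp ℝ 2 ν, ⟪A f, f⟫ ≠ 0 := by
    by_contra hc
    push_neg at hc
    apply hA0
    refine ContinuousLinearMap.ext fun g => ?_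
    have hz : ∀ f h : Lp ℝ 2 ν, ⟪A f, h⟫ = 0 := by
      intro f h
      have hsym : ⟪A h, f⟫ = ⟪A f, h⟫ := by rw [hsa h f, real_inner_comm]
      have h1 := hc (f + h)
      simp only [map_add, inner_add_left, inner_add_right, hc f, hc h] at h1
      linarith
    rw [ContinuousLinearMap.zero_apply]
    exact inner_self_eq_zero.mp (hz g (A g))
  obtain ⟨f₀, hf₀⟩ := hex
  have hexpand : ⟪A f₀, f₀⟫ = ∑ i, ∑ j, ⟪A (P f₀ i), P f₀ j⟫ := by
    conv_lhs => rw [← hPsum f₀]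
    rw [map_sum, sum_inner]
    exact Finset.sum_congr rfl fun i _ => inner_sum _ _ _
  have hcross : ∃ i j, i ≠ j ∧ ⟪A (P f₀ i), P f₀ j⟫ ≠ 0 := by
    by_contra hc
    push_neg at hc
    apply hf₀
    rw [hexpand]
    refine Finset.sum_eq_zero fun i _ => Finset.sum_eq_zero fun j _ => ?_
    by_cases hij : i = j
    · subst hij; exact hdiag f₀ i
    · exact hc i j hij
  have hpm : (∃ g : Lp ℝ 2 ν, ⟪A g, g⟫ < 0) ∧ (∃ g : Lp ℝ 2 ν, 0 < ⟪A g, g⟫) := by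
    obtain ⟨i₁, j₁, hij, hcne⟩ := hcross
    have h1 : ⟪A (P f₀ i₁), P f₀ i₁⟫ = 0 := hdiag f₀ i₁
    have h2 : ⟪A (P f₀ j₁), P f₀ j₁⟫ = 0 := hdiag f₀ j₁
    have hsym : ⟪A (P f₀ j₁), P f₀ i₁⟫ = ⟪A (P f₀ i₁), P f₀ j₁⟫ := by
      rw [hsa, real_inner_comm]
    have hQp : ⟪A (P f₀ i₁ + P f₀ j₁), P f₀ i₁ + P f₀ j₁⟫ = 2 * ⟪A (P f₀ i₁), P f₀ j₁⟫ := by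
      simp only [map_add, inner_add_left, inner_add_right, h1, h2, hsym]; ring
    have hQm : ⟪A (P f₀ i₁ - P f₀ j₁), P f₀ i₁ - P f₀ j₁⟫ = -(2 * ⟪A (P f₀ i₁), P f₀ j₁⟫) := by
      simp only [map_sub, inner_sub_left, inner_sub_right, h1, h2, hsym]; ring
    rcases lt_or_gt_of_ne hcne with h | h
    · exact ⟨⟨_, by rw [hQp]; linarith⟩, ⟨_, by rw [hQm]; linarith⟩⟩
    · exact ⟨⟨_, by rw [hQm]; linarith⟩, ⟨_, by rw [hQp]; linarith⟩⟩
  have hmA : mA < 0 := by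
    obtain ⟨g, hg⟩ := hpm.1
    have hg0 : g ≠ 0 := by rintro rfl; simp at hg
    have h1 := hm.1 (hscale g hg0)
    have h2 : (0:ℝ) < ‖g‖^2 := by
      have := norm_pos_iff.mpr hg0
      positivity
    have h3 : ⟪A g, g⟫ / ‖g‖^2 < 0 := div_neg_of_neg_of_pos hg h2
    exact lt_of_le_of_lt h1 h3
  have hMA : 0 < MA := by
    obtain ⟨g, hg⟩ := hpm.2
    have hg0 : g ≠ 0 := by rintro rfl; simp at hg
    have h1 := hM.1 (hscale g hg0)
    have h2 : (0:ℝ) < ‖g‖^2 := by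
      have := norm_pos_iff.mpr hg0
      positivity
    have h3 : 0 < ⟪A g, g⟫ / ‖g‖^2 := div_pos hg h2
    exact lt_of_lt_of_le h3 h1
  have hk1 : 1 ≤ k := by
    rcases Nat.eq_zero_or_pos k with rfl | h
    · exfalso
      have h0 : (Set.univ : Set V) = ∅ := by rw [← hcover]; exact Set.iUnion_of_empty I
      have h1 : ν Set.univ = 1 := measure_univ
      rw [h0, measure_empty] at h1
      exact one_ne_zero h1.symm
    · exact h
  have hkpos : (0:ℝ) < (k:ℝ) := by exact_mod_cast hk1
  have key : ∀ f : Lp ℝ 2 ν, ‖f‖ = 1 → ⟪A f, f⟫ ≤ mA * (1 - (k:ℝ)) := by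
    intro f hf
    have hsum_a : ∑ i, ‖P f i‖^2 = 1 := by
      have h1 : ∑ i, ⟪P f i, f⟫ = ⟪f, f⟫ := by rw [← sum_inner, hPsum]
      rw [real_inner_self_eq_norm_sq, hf, one_pow] at h1
      calc ∑ i, ‖P f i‖^2 = ∑ i, ⟪P f i, f⟫ := by
            exact Finset.sum_congr rfl fun i _ => (hPself f i).symm
        _ = 1 := h1
    have hAf_sum : ∑ i, ⟪A f, P f i⟫ = ⟪A f, f⟫ := by rw [← inner_sum, hPsum]
    have hAP : ∀ i, ⟪A (P f i), f⟫ = ⟪A f, P f i⟫ := fun i => by rw [hsa, real_inner_comm]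
    have hfP : ∀ i, ⟪f, P f i⟫ = ‖P f i‖^2 := fun i => by
      rw [real_inner_comm]; exact hPself f i
    have hQh : ∀ i, mA * ((k:ℝ)^2 * ‖P f i‖^2 - 2*(k:ℝ)*‖P f i‖^2 + 1)
        ≤ ⟪A f, f⟫ - 2*(k:ℝ)*⟪A f, P f i⟫ := by
      intro i
      have h1 := hlow ((k:ℝ) • P f i - f)
      have hN : ‖(k:ℝ) • P f i - f‖^2
          = (k:ℝ)^2 * ‖P f i‖^2 - 2*(k:ℝ)*‖P f i‖^2 + 1 := by
        rw [← real_inner_self_eq_norm_sq]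
        simp only [inner_sub_left, inner_sub_right, real_inner_smul_left, real_inner_smul_right,
          hPself f i, hfP i]
        rw [real_inner_self_eq_norm_sq f, hf, real_inner_self_eq_norm_sq]
        ring
      have hQ : ⟪A ((k:ℝ) • P f i - f), (k:ℝ) • P f i - f⟫
          = ⟪A f, f⟫ - 2*(k:ℝ)*⟪A f, P f i⟫ := by
        simp only [map_sub, A.map_smul, inner_sub_left, inner_sub_right, real_inner_smul_left,
          real_inner_smul_right, hdiag f i, hAP i]
        ring
      rw [hN, hQ] at h1
      exact h1
    have hsumineq := Finset.sum_le_sum (fun i (_ : i ∈ Finset.univ) => hQh i)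
    have hL : ∑ i : Fin k, mA * ((k:ℝ)^2 * ‖P f i‖^2 - 2*(k:ℝ)*‖P f i‖^2 + 1)
        = mA * ((k:ℝ)^2 - (k:ℝ)) := by
      rw [← Finset.mul_sum]
      congr 1
      rw [Finset.sum_add_distrib, Finset.sum_sub_distrib, ← Finset.mul_sum, ← Finset.mul_sum,
        hsum_a]
      simp [Finset.card_univ]
      ring
    have hR : ∑ i : Fin k, (⟪A f, f⟫ - 2*(k:ℝ)*⟪A f, P f i⟫) = -((k:ℝ) * ⟪A f, f⟫) := by
      rw [Finset.sum_sub_distrib, ← Finset.mul_sum, hAf_sum, Finset.sum_const,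
        Finset.card_univ, Fintype.card_fin, nsmul_eq_mul]
      ring
    rw [hL, hR] at hsumineq
    nlinarith [hsumineq, hkpos]
  have hMle : MA ≤ mA * (1 - (k:ℝ)) := by
    apply hM.2
    rintro r ⟨f, hf, rfl⟩
    exact key f hf
  refine ⟨hmA, hMA, ?_⟩
  have h4 : 1 - (k:ℝ) ≤ MA / mA := by
    rw [le_div_iff_of_neg hmA]
    linarith [hMle, mul_comm mA (1 - (k:ℝ))]
  linarith
end
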